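/- Maximal control of quotients of Poisson integrals on cones: for every aperture c > 0 there is a constant C_c > 0 such that for all finite Borel measures η₁ and η₂ on ℝ with η₂ ≠ 0, with Poisson integrals h₁ and h₂, for every x₀ ∈ ℝ and every z in the cone Γ_c(x₀), one has h₁(z)/h₂(z) ≤ C_c · M_{η₁/η₂}(x₀), where M_{η₁/η₂}(x₀) = sup_{r>0} η₁([x₀−r, x₀+r])/η₂([x₀−r, x₀+r]) ∈ [0,∞]. -/

import Mathlib

open MeasureTheory Filter Topology
open scoped ENNReal

/-- The Poisson kernel of the upper half-plane. -/
noncomputable def upperHalfPlanePoissonKernel (z : ℂ) (x : ℝ) : ℝ :=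
  z.im / ((z.re - x) ^ 2 + z.im ^ 2)

/-- The Poisson integral of a measure on `ℝ`. -/
noncomputable def poissonIntegral (η : Measure ℝ) (z : ℂ) : ℝ :=
  ∫ x, upperHalfPlanePoissonKernel z x ∂η

/-- The nontangential cone of aperture `c` at `x₀`. -/
def cone (x₀ c : ℝ) : Set ℂ :=
  {z : ℂ | 0 < z.im ∧ |z.re - x₀| ≤ c * z.im}

/-- The two-measure maximal function over symmetric intervals. -/
noncomputable def maximalFunction (η₁ η₂ : Measure ℝ) (x₀ : ℝ) : ENNReal :=
  ⨆ (r : ℝ) (_ : 0 < r),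
    η₁ (Set.Icc (x₀ - r) (x₀ + r)) / η₂ (Set.Icc (x₀ - r) (x₀ + r))

namespace PoissonAux

open Set Real

lemma kernel_pos {z : ℂ} (hz : 0 < z.im) (x : ℝ) : 0 < upperHalfPlanePoissonKernel z x := by
  apply div_pos hz; positivity

lemma kernel_measurable (z : ℂ) : Measurable (upperHalfPlanePoissonKernel z) := by
  unfold upperHalfPlanePoissonKernel
  exact measurable_const.div (by fun_prop)

lemma kernel_le {z : ℂ} (hz : 0 < z.im) (x : ℝ) : upperHalfPlanePoissonKernel z x ≤ 1 / z.im := by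
  unfold upperHalfPlanePoissonKernel
  rw [div_le_div_iff₀ (by positivity) hz]
  nlinarith [sq_nonneg (z.re - x)]

/-- Comparison of Poisson kernels at two points with the same height. -/
lemma kernel_comp {y c a b : ℝ} (hy : 0 < y) (h : (a - b) ^ 2 ≤ c ^ 2 * y ^ 2) (x : ℝ) :
    y / ((a - x) ^ 2 + y ^ 2) ≤ (2 * c ^ 2 + 2) * (y / ((b - x) ^ 2 + y ^ 2)) := by
  have hD : (b - x) ^ 2 + y ^ 2 ≤ (2 * c ^ 2 + 2) * ((a - x) ^ 2 + y ^ 2) := by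
    nlinarith [sq_nonneg (b - 2 * a + x), sq_nonneg (c * (a - x)), sq_nonneg (c * y),
      sq_nonneg y]
  rw [mul_div_assoc', div_le_div_iff₀ (by positivity) (by positivity)]
  nlinarith [mul_le_mul_of_nonneg_left hD hy.le]

lemma lint_comp (η : Measure ℝ) (z w : ℂ) {K : ℝ} (hK : 0 ≤ K)
    (h : ∀ x, upperHalfPlanePoissonKernel z x ≤ K * upperHalfPlanePoissonKernel w x) :
    ∫⁻ x, ENNReal.ofReal (upperHalfPlanePoissonKernel z x) ∂η ≤
      ENNReal.ofReal K * ∫⁻ x, ENNReal.ofReal (upperHalfPlanePoissonKernel w x) ∂η := by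
  rw [← lintegral_const_mul' _ _ ENNReal.ofReal_ne_top]
  refine lintegral_mono fun x => ?_
  calc ENNReal.ofReal (upperHalfPlanePoissonKernel z x) ≤ ENNReal.ofReal (K * upperHalfPlanePoissonKernel w x) :=
        ENNReal.ofReal_le_ofReal (h x)
    _ = ENNReal.ofReal K * ENNReal.ofReal (upperHalfPlanePoissonKernel w x) := ENNReal.ofReal_mul hK

lemma icc_bound (η₁ η₂ : Measure ℝ) [IsFiniteMeasure η₂] (x₀ : ℝ)
    (hM : maximalFunction η₁ η₂ x₀ ≠ ∞) {r : ℝ} (hr : 0 < r) :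
    η₁ (Icc (x₀ - r) (x₀ + r)) ≤ maximalFunction η₁ η₂ x₀ * η₂ (Icc (x₀ - r) (x₀ + r)) := by
  have h : η₁ (Icc (x₀ - r) (x₀ + r)) / η₂ (Icc (x₀ - r) (x₀ + r)) ≤
      maximalFunction η₁ η₂ x₀ := by
    exact le_iSup₂ (f := fun (r : ℝ) (_ : 0 < r) =>
      η₁ (Icc (x₀ - r) (x₀ + r)) / η₂ (Icc (x₀ - r) (x₀ + r))) r hr
  rcases eq_or_ne (η₂ (Icc (x₀ - r) (x₀ + r))) 0 with h0 | h0
  · rcases eq_or_ne (η₁ (Icc (x₀ - r) (x₀ + r))) 0 with h1 | h1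
    · simp [h1]
    · rw [h0, ENNReal.div_zero h1] at h
      exact absurd (top_le_iff.mp h) hM
  · exact (ENNReal.div_le_iff_le_mul (Or.inl h0) (Or.inl (measure_ne_top _ _))).mp h

lemma ioo_bound (η₁ η₂ : Measure ℝ) [IsFiniteMeasure η₂] (x₀ : ℝ)
    (hM : maximalFunction η₁ η₂ x₀ ≠ ∞) (r : ℝ) :
    η₁ (Ioo (x₀ - r) (x₀ + r)) ≤ maximalFunction η₁ η₂ x₀ * η₂ (Ioo (x₀ - r) (x₀ + r)) := by
  rcases le_or_gt r 0 with hr | hr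
  · rw [Ioo_eq_empty (by intro h; linarith)]
    simp
  set S : ℕ → Set ℝ := fun n => Icc (x₀ - (r - r / (n + 2))) (x₀ + (r - r / (n + 2))) with hS
  have hrn : ∀ n : ℕ, 0 < r - r / (n + 2) := by
    intro n
    have h1 : r / ((n : ℝ) + 2) ≤ r / 2 := by
      apply div_le_div_of_nonneg_left hr.le (by norm_num)
      have : (0 : ℝ) ≤ (n : ℝ) := Nat.cast_nonneg n
      linarith
    linarith
  have hmono : Monotone S := by
    intro m n hmn
    apply Icc_subset_Icc
    · have : r / ((n : ℝ) + 2) ≤ r / ((m : ℝ) + 2) := by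
        apply div_le_div_of_nonneg_left hr.le (by positivity)
        have : (m : ℝ) ≤ (n : ℝ) := Nat.cast_le.mpr hmn
        linarith
      linarith
    · have : r / ((n : ℝ) + 2) ≤ r / ((m : ℝ) + 2) := by
        apply div_le_div_of_nonneg_left hr.le (by positivity)
        have : (m : ℝ) ≤ (n : ℝ) := Nat.cast_le.mpr hmn
        linarith
      linarith
  have hsub : ∀ n, S n ⊆ Ioo (x₀ - r) (x₀ + r) := by
    intro n x hx
    have h1 := hx.1
    have h2 := hx.2
    have h3 : 0 < r / ((n : ℝ) + 2) := by positivity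
    exact ⟨by linarith, by linarith⟩
  have hunion : ⋃ n, S n = Ioo (x₀ - r) (x₀ + r) := by
    refine subset_antisymm (iUnion_subset hsub) fun x hx => ?_
    have habs : |x - x₀| < r := abs_lt.mpr ⟨by linarith [hx.1], by linarith [hx.2]⟩
    set ε := r - |x - x₀| with hε
    have hεpos : 0 < ε := by simp [hε]; linarith
    obtain ⟨n, hn⟩ := exists_nat_ge (r / ε)
    refine mem_iUnion.mpr ⟨n, ?_⟩
    have hre : 0 < r / ε := div_pos hr hεpos
    have hle : r / ((n : ℝ) + 2) ≤ r / (r / ε) := by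
      apply div_le_div_of_nonneg_left hr.le hre
      linarith
    have heq : r / (r / ε) = ε := by
      field_simp
    have : r / ((n : ℝ) + 2) ≤ ε := heq ▸ hle
    have habs2 : |x - x₀| ≤ r - r / ((n : ℝ) + 2) := by
      have := abs_lt.mp habs
      linarith [abs_nonneg (x - x₀)]
    obtain ⟨ha, hb⟩ := abs_le.mp habs2
    exact ⟨by linarith, by linarith⟩
  calc η₁ (Ioo (x₀ - r) (x₀ + r)) = ⨆ n, η₁ (S n) := by
        rw [← hunion, (hmono.directed_le).measure_iUnion]
    _ ≤ ⨆ n, maximalFunction η₁ η₂ x₀ * η₂ (S n) :=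
        iSup_mono fun n => icc_bound η₁ η₂ x₀ hM (hrn n)
    _ ≤ maximalFunction η₁ η₂ x₀ * η₂ (Ioo (x₀ - r) (x₀ + r)) :=
        iSup_le fun n => mul_le_mul_right (measure_mono (hsub n)) _

lemma superlevel (x₀ : ℝ) {y t : ℝ} (hy : 0 < y) (ht : 0 < t) :
    {x : ℝ | t < upperHalfPlanePoissonKernel ⟨x₀, y⟩ x} =
      Ioo (x₀ - Real.sqrt (y / t - y ^ 2)) (x₀ + Real.sqrt (y / t - y ^ 2)) := by
  ext x
  have hD : (0 : ℝ) ≤ (x₀ - x) ^ 2 + y ^ 2 := by positivity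
  simp only [Set.mem_setOf_eq, Set.mem_Ioo, upperHalfPlanePoissonKernel]
  constructor
  · intro h
    have hD' : 0 < (x₀ - x) ^ 2 + y ^ 2 := by positivity
    have h1 : t * ((x₀ - x) ^ 2 + y ^ 2) < y := (lt_div_iff₀ hD').mp h
    have h2 : (x - x₀) ^ 2 < y / t - y ^ 2 := by
      rw [lt_sub_iff_add_lt, lt_div_iff₀ ht]
      nlinarith
    have h3 : |x - x₀| < Real.sqrt (y / t - y ^ 2) := by
      rw [Real.lt_sqrt (abs_nonneg _), sq_abs]; exact h2
    obtain ⟨ha, hb⟩ := abs_lt.mp h3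
    exact ⟨by linarith, by linarith⟩
  · rintro ⟨ha, hb⟩
    have h3 : |x - x₀| < Real.sqrt (y / t - y ^ 2) := abs_lt.mpr ⟨by linarith, by linarith⟩
    have h2 : (x - x₀) ^ 2 < y / t - y ^ 2 := by
      rw [← sq_abs]; exact (Real.lt_sqrt (abs_nonneg _)).mp h3
    have hD' : 0 < (x₀ - x) ^ 2 + y ^ 2 := by positivity
    rw [lt_div_iff₀ hD']
    have h4 : ((x₀ - x) ^ 2 + y ^ 2) * t < (y / t) * t := by
      apply mul_lt_mul_of_pos_right _ ht
      nlinarith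
    have h5 : (y / t) * t = y := by field_simp
    linarith [h4, h5 ▸ h4]

lemma vertical (η₁ η₂ : Measure ℝ) [IsFiniteMeasure η₂] (x₀ y : ℝ) (hy : 0 < y)
    (hM : maximalFunction η₁ η₂ x₀ ≠ ∞) :
    ∫⁻ x, ENNReal.ofReal (upperHalfPlanePoissonKernel ⟨x₀, y⟩ x) ∂η₁ ≤
      maximalFunction η₁ η₂ x₀ * ∫⁻ x, ENNReal.ofReal (upperHalfPlanePoissonKernel ⟨x₀, y⟩ x) ∂η₂ := by
  have him : (⟨x₀, y⟩ : ℂ).im = y := rfl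
  have hnn : ∀ x : ℝ, 0 ≤ upperHalfPlanePoissonKernel ⟨x₀, y⟩ x := fun x =>
    (kernel_pos (him ▸ hy) x).le
  rw [lintegral_eq_lintegral_meas_lt η₁ (Eventually.of_forall hnn)
      (kernel_measurable _).aemeasurable,
    lintegral_eq_lintegral_meas_lt η₂ (Eventually.of_forall hnn)
      (kernel_measurable _).aemeasurable,
    ← lintegral_const_mul' _ _ hM]
  refine lintegral_mono_ae ((ae_restrict_iff' measurableSet_Ioi).mpr
    (Eventually.of_forall fun t ht => ?_))
  rw [superlevel x₀ hy ht]
  exact ioo_bound η₁ η₂ x₀ hM _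

end PoissonAux

open PoissonAux Set in
theorem maximal_control_of_quotients :
    ∀ c > (0 : ℝ), ∃ C > (0 : ℝ),
      ∀ (η₁ η₂ : Measure ℝ), IsFiniteMeasure η₁ → IsFiniteMeasure η₂ → η₂ ≠ 0 →
        ∀ (x₀ : ℝ) (z : ℂ), z ∈ cone x₀ c →
          ENNReal.ofReal (poissonIntegral η₁ z / poissonIntegral η₂ z) ≤
            ENNReal.ofReal C * maximalFunction η₁ η₂ x₀ := by
  intro c hc
  refine ⟨(2 * c ^ 2 + 2) ^ 2, by positivity, ?_⟩
  intro η₁ η₂ hf1 hf2 hη₂ x₀ z hz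
  haveI := hf1; haveI := hf2
  set M := maximalFunction η₁ η₂ x₀ with hMdef
  by_cases hM : M = ∞
  · rw [hM, ENNReal.mul_top (by
      simp only [ne_eq, ENNReal.ofReal_eq_zero, not_le]; positivity)]
    exact le_top
  obtain ⟨hy, hre⟩ := hz
  set K : ℝ := 2 * c ^ 2 + 2 with hKdef
  have hK0 : (0 : ℝ) ≤ K := by positivity
  set w : ℂ := ⟨x₀, z.im⟩ with hw
  have hsq : (z.re - x₀) ^ 2 ≤ c ^ 2 * z.im ^ 2 := by
    obtain ⟨h1, h2⟩ := abs_le.mp hre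
    nlinarith
  have hK1 : ∀ x, upperHalfPlanePoissonKernel z x ≤ K * upperHalfPlanePoissonKernel w x := fun x =>
    kernel_comp hy hsq x
  have hK2 : ∀ x, upperHalfPlanePoissonKernel w x ≤ K * upperHalfPlanePoissonKernel z x := fun x =>
    kernel_comp hy (by nlinarith) x
  set L : Measure ℝ → ℂ → ENNReal :=
    fun η ζ => ∫⁻ x, ENNReal.ofReal (upperHalfPlanePoissonKernel ζ x) ∂η with hL
  have hfin : ∀ (η : Measure ℝ) (ζ : ℂ), IsFiniteMeasure η → 0 < ζ.im → L η ζ ≠ ∞ := by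
    intro η ζ hη hζ
    haveI := hη
    have hb : L η ζ ≤ ∫⁻ _, ENNReal.ofReal (1 / ζ.im) ∂η :=
      lintegral_mono fun x => ENNReal.ofReal_le_ofReal (kernel_le hζ x)
    rw [lintegral_const] at hb
    exact (hb.trans_lt (ENNReal.mul_lt_top ENNReal.ofReal_lt_top
      (measure_lt_top η _))).ne
  have hwim : w.im = z.im := rfl
  have hpos : 0 < L η₂ z := by
    rw [hL]
    rw [lintegral_pos_iff_support ((kernel_measurable z).ennreal_ofReal)]
    have hsup : Function.support (fun x => ENNReal.ofReal (upperHalfPlanePoissonKernel z x)) = univ :=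
      eq_univ_of_forall fun x => by
        simp only [Function.mem_support, ne_eq, ENNReal.ofReal_eq_zero, not_le]
        exact kernel_pos hy x
    rw [hsup]
    exact Measure.measure_univ_pos.mpr hη₂
  have hchain : L η₁ z ≤ ENNReal.ofReal ((2 * c ^ 2 + 2) ^ 2) * M * L η₂ z := by
    have h1 : L η₁ z ≤ ENNReal.ofReal K * L η₁ w := lint_comp η₁ z w hK0 hK1
    have h2 : L η₁ w ≤ M * L η₂ w := vertical η₁ η₂ x₀ z.im hy hM
    have h3 : L η₂ w ≤ ENNReal.ofReal K * L η₂ z := lint_comp η₂ w z hK0 hK2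
    calc L η₁ z ≤ ENNReal.ofReal K * L η₁ w := h1
      _ ≤ ENNReal.ofReal K * (M * L η₂ w) := mul_le_mul_right h2 _
      _ ≤ ENNReal.ofReal K * (M * (ENNReal.ofReal K * L η₂ z)) := by
          exact mul_le_mul_right (mul_le_mul_right h3 _) _
      _ = ENNReal.ofReal ((2 * c ^ 2 + 2) ^ 2) * M * L η₂ z := by
          rw [show ((2 * c ^ 2 + 2) ^ 2 : ℝ) = K * K by rw [hKdef]; ring,
            ENNReal.ofReal_mul hK0]
          ring
  have hI : ∀ η : Measure ℝ, poissonIntegral η z = (L η z).toReal := by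
    intro η
    rw [hL, poissonIntegral,
      integral_eq_lintegral_of_nonneg_ae (Eventually.of_forall fun x => (kernel_pos hy x).le)
        (kernel_measurable z).aestronglyMeasurable]
  have hfin1 := hfin η₁ z hf1 hy
  have hfin2 := hfin η₂ z hf2 hy
  rw [hI, hI, ENNReal.ofReal_div_of_pos (ENNReal.toReal_pos hpos.ne' hfin2),
    ENNReal.ofReal_toReal hfin1, ENNReal.ofReal_toReal hfin2,
    ENNReal.div_le_iff_le_mul (Or.inl hpos.ne') (Or.inl hfin2)]
  exact hchain
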